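/- Let A and M be commutative groups and c : A × A → M a bilinear map, and let à be the group whose underlying set is A × M with multiplication (a, ε)·(a', ε') = (a·a', c(a, a')·ε·ε'). For a subgroup B of A, the subgroup B × M of à is a maximal abelian subgroup of à if and only if B = {a ∈ A : c(a, b) = c(b, a) for all b ∈ B}. -/

import Mathlib

/-- The underlying set `A × M` of the extension group `Ã`. -/
@[ext]
structure Tilde (A M : Type*) where
  fst : A
  snd : M

namespace Tilde

variable {A M : Type*} [CommGroup A] [CommGroup M]

/-- Multiplication `(a, ε)·(a', ε') = (a·a', c(a, a')·ε·ε')` on `A × M`. -/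
def tmul (c : A → A → M) (x y : Tilde A M) : Tilde A M :=
  ⟨x.fst * y.fst, c x.fst y.fst * (x.snd * y.snd)⟩

/-- For bilinear `c`, the multiplication `tmul c` makes `A × M` a group `Ã`. -/
def tildeGroup (c : A → A → M)
    (h1 : ∀ x y z : A, c (x * y) z = c x z * c y z)
    (h2 : ∀ x y z : A, c x (y * z) = c x y * c x z) :
    Group (Tilde A M) where
  mul := tmul c
  one := ⟨1, 1⟩
  inv x := ⟨x.fst⁻¹, c x.fst x.fst * x.snd⁻¹⟩
  mul_assoc x y z := by
    show tmul c (tmul c x y) z = tmul c x (tmul c y z)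
    unfold tmul
    refine Tilde.ext (mul_assoc _ _ _) ?_
    show c (x.fst * y.fst) z.fst * (c x.fst y.fst * (x.snd * y.snd) * z.snd)
        = c x.fst (y.fst * z.fst) * (x.snd * (c y.fst z.fst * (y.snd * z.snd)))
    rw [h1, h2]
    ac_rfl
  one_mul x := by
    have hc1 : ∀ y : A, c 1 y = 1 := by
      intro y
      have := h1 1 1 y
      rw [one_mul] at this
      exact (left_eq_mul.mp this)
    show tmul c ⟨1, 1⟩ x = x
    unfold tmul
    ext <;> simp [hc1]
  mul_one x := by
    have hc1 : ∀ y : A, c y 1 = 1 := by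
      intro y
      have := h2 y 1 1
      rw [one_mul] at this
      exact (left_eq_mul.mp this)
    show tmul c x ⟨1, 1⟩ = x
    unfold tmul
    ext <;> simp [hc1]
  inv_mul_cancel x := by
    have hc1 : ∀ y : A, c 1 y = 1 := by
      intro y
      have := h1 1 1 y
      rw [one_mul] at this
      exact (left_eq_mul.mp this)
    have hinv : c x.fst⁻¹ x.fst * c x.fst x.fst = 1 := by
      have h := h1 x.fst⁻¹ x.fst x.fst
      rw [inv_mul_cancel, hc1] at h
      exact h.symm
    show tmul c ⟨x.fst⁻¹, c x.fst x.fst * x.snd⁻¹⟩ x = ⟨1, 1⟩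
    unfold tmul
    refine Tilde.ext (inv_mul_cancel _) ?_
    show c x.fst⁻¹ x.fst * ((c x.fst x.fst * x.snd⁻¹) * x.snd) = 1
    calc c x.fst⁻¹ x.fst * ((c x.fst x.fst * x.snd⁻¹) * x.snd)
        = (c x.fst⁻¹ x.fst * c x.fst x.fst) * (x.snd⁻¹ * x.snd) := by ac_rfl
      _ = 1 := by rw [hinv, inv_mul_cancel, mul_one]

end Tilde


/-- For bilinear `c`, the set of elements commuting (under `c`) with a fixed `u`
is a subgroup of `A`. -/
def commSubgroup {A M : Type*} [CommGroup A] [CommGroup M] (c : A → A → M)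
    (h1 : ∀ x y z : A, c (x * y) z = c x z * c y z)
    (h2 : ∀ x y z : A, c x (y * z) = c x y * c x z)
    (u : A) : Subgroup A where
  carrier := {b | c u b = c b u}
  one_mem' := by
    have l : c u 1 = 1 := by
      have := h2 u 1 1; rw [one_mul] at this; exact (left_eq_mul.mp this)
    have r : c 1 u = 1 := by
      have := h1 1 1 u; rw [one_mul] at this; exact (left_eq_mul.mp this)
    simp [Set.mem_setOf_eq, l, r]
  mul_mem' := by
    intro x y hx hy
    simp only [Set.mem_setOf_eq] at *
    rw [h2, h1, hx, hy]
  inv_mem' := by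
    intro x hx
    simp only [Set.mem_setOf_eq] at *
    have l : c u x⁻¹ = (c u x)⁻¹ := by
      have := h2 u x x⁻¹
      rw [mul_inv_cancel] at this
      have h0 : c u 1 = 1 := by
        have := h2 u 1 1; rw [one_mul] at this; exact (left_eq_mul.mp this)
      rw [h0] at this
      exact eq_inv_of_mul_eq_one_right this.symm
    have r : c x⁻¹ u = (c x u)⁻¹ := by
      have := h1 x x⁻¹ u
      rw [mul_inv_cancel] at this
      have h0 : c 1 u = 1 := by
        have := h1 1 1 u; rw [one_mul] at this; exact (left_eq_mul.mp this)
      rw [h0] at this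
      exact eq_inv_of_mul_eq_one_right this.symm
    rw [l, r, hx]

theorem mem_commSubgroup_iff {A M : Type*} [CommGroup A] [CommGroup M] (c : A → A → M)
    (h1 : ∀ x y z : A, c (x * y) z = c x z * c y z)
    (h2 : ∀ x y z : A, c x (y * z) = c x y * c x z)
    {u v : A} : v ∈ commSubgroup c h1 h2 u ↔ c u v = c v u := Iff.rfl

theorem mem_commSubgroup_comm {A M : Type*} [CommGroup A] [CommGroup M] (c : A → A → M)
    (h1 : ∀ x y z : A, c (x * y) z = c x z * c y z)
    (h2 : ∀ x y z : A, c x (y * z) = c x y * c x z)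
    {u v : A} : u ∈ commSubgroup c h1 h2 v ↔ v ∈ commSubgroup c h1 h2 u := by
  constructor <;> (intro h; exact h.symm)

/-- Abstract form of Lemma 4.1: in the central extension `Ã` of `A` by `M` defined by a
bilinear cocycle `c`, for a subgroup `B` of `A`, the subgroup `B × M` of `Ã` (i.e. the
subgroup whose elements are those `x` with `x.fst ∈ B`) is a maximal abelian subgroup of
`Ã` if and only if `B = {a ∈ A : c(a, b) = c(b, a) for all b ∈ B}`. -/
theorem tilde_maximal_abelian_iff
    {A M : Type*} [CommGroup A] [CommGroup M] (c : A → A → M)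
    (h1 : ∀ x y z : A, c (x * y) z = c x z * c y z)
    (h2 : ∀ x y z : A, c x (y * z) = c x y * c x z)
    (B : Subgroup A) :
    let _G : Group (Tilde A M) := Tilde.tildeGroup c h1 h2
    ∀ S : Subgroup (Tilde A M), (∀ x : Tilde A M, x ∈ S ↔ x.fst ∈ B) →
      (((∀ x ∈ S, ∀ y ∈ S, x * y = y * x) ∧
          ∀ T : Subgroup (Tilde A M), (∀ x ∈ T, ∀ y ∈ T, x * y = y * x) → S ≤ T → S = T) ↔
        ∀ a : A, a ∈ B ↔ ∀ b ∈ B, c a b = c b a) := by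
  intro _G S hS
  -- the projection to `A` is a monoid hom
  let pi : Tilde A M →* A := { toFun := Tilde.fst, map_one' := rfl, map_mul' := fun _ _ => rfl }
  -- commuting in the extension is a condition on the cocycle
  have hcomm : ∀ x y : Tilde A M, x * y = y * x ↔ c x.fst y.fst = c y.fst x.fst := by
    intro x y
    show Tilde.tmul c x y = Tilde.tmul c y x ↔ _
    unfold Tilde.tmul
    constructor
    · intro h
      have h2' := congrArg Tilde.snd h
      simp only at h2'
      have : x.snd * y.snd = y.snd * x.snd := mul_comm _ _
      rw [this] at h2'
      exact mul_right_cancel h2'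
    · intro h
      refine Tilde.ext (mul_comm _ _) ?_
      show c x.fst y.fst * (x.snd * y.snd) = c y.fst x.fst * (y.snd * x.snd)
      rw [h, mul_comm x.snd]
  constructor
  · rintro ⟨habel, hmax⟩ a
    constructor
    · intro haB b hbB
      have hx : (⟨a, 1⟩ : Tilde A M) ∈ S := (hS _).mpr haB
      have hy : (⟨b, 1⟩ : Tilde A M) ∈ S := (hS _).mpr hbB
      exact (hcomm ⟨a, 1⟩ ⟨b, 1⟩).mp (habel _ hx _ hy)
    · intro ha
      -- the bigger subgroup `(B ⊔ ⟨a⟩) × M`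
      set C : Subgroup A := B ⊔ Subgroup.zpowers a with hC
      have hCK : ∀ v ∈ C, C ≤ commSubgroup c h1 h2 v := by
        have step : ∀ u : A, B ≤ commSubgroup c h1 h2 u → a ∈ commSubgroup c h1 h2 u →
            C ≤ commSubgroup c h1 h2 u := by
          intro u hBu hau
          rw [hC]
          exact sup_le hBu ((Subgroup.zpowers_le).mpr hau)
        intro v hv
        apply step
        · intro b hb
          rw [mem_commSubgroup_comm]
          -- v ∈ commSubgroup b
          refine step b ?_ ?_ hv
          · intro b' hb'
            have h' := (hS ⟨b', 1⟩).mpr hb'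
            have h'' := (hS ⟨b, 1⟩).mpr hb
            exact (mem_commSubgroup_iff c h1 h2).mpr
              ((hcomm ⟨b, 1⟩ ⟨b', 1⟩).mp (habel _ h'' _ h'))
          · exact (mem_commSubgroup_iff c h1 h2).mpr ((ha b hb).symm)
        · rw [mem_commSubgroup_comm]
          refine step a ?_ ?_ hv
          · intro b' hb'
            exact (mem_commSubgroup_iff c h1 h2).mpr (ha b' hb')
          · rfl
      set T : Subgroup (Tilde A M) := C.comap pi with hT
      have hTab : ∀ x ∈ T, ∀ y ∈ T, x * y = y * x := by
        intro x hx y hy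
        exact (hcomm x y).mpr (((mem_commSubgroup_iff c h1 h2).mp (hCK y.fst hy hx)).symm)
      have hST : S ≤ T := by
        intro x hx
        have : x.fst ∈ B := (hS x).mp hx
        exact le_sup_left (a := B) (b := Subgroup.zpowers a) this
      have := hmax T hTab hST
      have haT : (⟨a, 1⟩ : Tilde A M) ∈ T :=
        le_sup_right (a := B) (b := Subgroup.zpowers a) (Subgroup.mem_zpowers a)
      rw [← this] at haT
      exact (hS _).mp haT
  · intro hB
    constructor
    · intro x hx y hy
      exact (hcomm x y).mpr ((hB x.fst).mp ((hS x).mp hx) y.fst ((hS y).mp hy))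
    · intro T hTab hST
      refine le_antisymm hST ?_
      intro x hx
      refine (hS x).mpr ((hB x.fst).mpr ?_)
      intro b hb
      have hbT : (⟨b, 1⟩ : Tilde A M) ∈ T := hST ((hS _).mpr hb)
      exact (hcomm x ⟨b, 1⟩).mp (hTab x hx _ hbT)
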